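/- arXiv:2101.04272 — 2 statements merged into one kernel-verified Lean document; each statement's English description precedes it below -/
import Mathlib

section
/- Let n ≥ 2, let U ⊆ ℝⁿ be an open neighborhood of the origin, and let g : U → ℝ be a C^∞ function. Assume: (i) g(x) = 0 and ∇g(x) = 0 for every x ∈ U with h_n(x) = 0; and (ii) for each j = 1,…,n−1, g(x) = h_n(x)² and ∇g(x) = ∇(h_n²)(x) for every x ∈ U with h_{n,j}(x) = 0. Then there exist an open neighborhood V ⊆ U of the origin and a C^∞ function β : V → ℝ such that g = (1 + β · ∏_{j=1}^{n−1} h_{n,j}²) · h_n² on V. -/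
open scoped ContDiff
open Set Metric MeasureTheory intervalIntegral

noncomputable section

/-- The polynomial `h_i` in the variables `x_1, …, x_i` (0-indexed: it depends on
coordinates `0, …, i-1`): `h_0 = 0`, `h_{i+1}(x) = x 0 - (h_i (x ∘ (·+1)))^2`. -/
def hpoly : ℕ → (ℕ → ℝ) → ℝ
  | 0, _ => 0
  | i + 1, x => x 0 - (hpoly i fun k => x (k + 1)) ^ 2

/-- Extension of a vector of `ℝⁿ` by zeros to an infinite sequence. -/
def extv {n : ℕ} (x : Fin n → ℝ) : ℕ → ℝ := fun k => if h : k < n then x ⟨k, h⟩ else 0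

/-- `h_{i,j}` as a function on `ℝⁿ` (0-indexed: it depends on coordinates `j, …, i-1`;
in the paper's notation `h_{i,j}(x) = h_{i-j}(x_{j+1}, …, x_i)`). -/
def hh (n i j : ℕ) (x : Fin n → ℝ) : ℝ := hpoly (i - j) fun k => extv x (j + k)

/-- The gradient of a function on `ℝⁿ`, via the Fréchet derivative. -/
def grad {n : ℕ} (f : (Fin n → ℝ) → ℝ) (x : Fin n → ℝ) : Fin n → ℝ :=
  fun k => fderiv ℝ f x (Pi.single k 1)

/-- The `m`-th standard basis vector of `ℝⁿ` (zero if `m ≥ n`). -/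
def evec (n m : ℕ) : Fin n → ℝ := fun k => if (k : ℕ) = m then 1 else 0

lemma hpoly_eq_zero {i : ℕ} {y : ℕ → ℝ} (h : ∀ k, y k = 0) : hpoly i y = 0 := by
  induction i generalizing y with
  | zero => rfl
  | succ i ih => simp [hpoly, h 0, ih (fun k => h (k + 1))]

lemma hh_zero (n j : ℕ) : hh n n j 0 = 0 :=
  hpoly_eq_zero fun k => by simp [extv]

lemma hh_stop (n : ℕ) (x : Fin n → ℝ) : hh n n n x = 0 := by
  simp [hh, Nat.sub_self, hpoly]

lemma hh_succ {n j : ℕ} (hj : j < n) (x : Fin n → ℝ) :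
    hh n n j x = x ⟨j, hj⟩ - (hh n n (j + 1) x) ^ 2 := by
  unfold hh
  have h1 : n - j = (n - (j + 1)) + 1 := by omega
  rw [h1]
  show (fun k => extv x (j + k)) 0 - _ ^ 2 = _
  congr 1
  · simp [extv, hj]
  · refine congrArg (fun y => y ^ 2) (congrArg _ (funext fun k => ?_))
    show extv x (j + (k + 1)) = extv x (j + 1 + k)
    congr 1
    omega

lemma contDiff_hh (n j : ℕ) : ContDiff ℝ ∞ (hh n n j) := by
  obtain ⟨d, hd⟩ : ∃ d, n - j ≤ d := ⟨n - j, le_rfl⟩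
  induction d generalizing j with
  | zero =>
    have : ∀ x, hh n n j x = 0 := by
      intro x
      have : n - j = 0 := by omega
      simp [hh, this, hpoly]
    simp only [funext this]
    exact contDiff_const
  | succ d ih =>
    by_cases hj : j < n
    · have : hh n n j = fun x => x ⟨j, hj⟩ - (hh n n (j + 1) x) ^ 2 :=
        funext fun x => hh_succ hj x
      rw [this]
      exact ((ContinuousLinearMap.proj (R := ℝ) (φ := fun _ : Fin n => ℝ)
        ⟨j, hj⟩).contDiff).sub ((ih (j + 1) (by omega)).pow 2)
    · have : ∀ x, hh n n j x = 0 := by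
        intro x
        have : n - j = 0 := by omega
        simp [hh, this, hpoly]
      simp only [funext this]
      exact contDiff_const

lemma hh_update {n k : ℕ} (x : Fin n → ℝ) (i : Fin n) (v : ℝ) (h : (i : ℕ) < k) :
    hh n n k (Function.update x i v) = hh n n k x := by
  unfold hh
  congr 1
  funext l
  unfold extv
  by_cases hl : k + l < n
  · simp only [dif_pos hl]
    exact Function.update_of_ne (by simp [Fin.ext_iff]; omega) _ _
  · simp [dif_neg hl]

lemma add_single_eq_update {n : ℕ} (x : Fin n → ℝ) (i : Fin n) (c : ℝ) :
    x + c • (Pi.single i 1 : Fin n → ℝ) = Function.update x i (x i + c) := by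
  funext k
  by_cases hk : k = i
  · subst hk; simp
  · simp [Function.update_of_ne hk, Pi.single_apply, hk]



variable {H : Type} [NormedAddCommGroup H] [NormedSpace ℝ H] [FiniteDimensional ℝ H]

/-- partial derivative in the first variable, as a continuous linear map -/
def pderivFst {B : Type} [NormedAddCommGroup B] [NormedSpace ℝ B]
    (F : H × ℝ → B) (p : H × ℝ) : H →L[ℝ] B :=
  (fderiv ℝ F p).comp (ContinuousLinearMap.inl ℝ H ℝ)

lemma pderivFst_apply {B : Type} [NormedAddCommGroup B] [NormedSpace ℝ B]
    (F : H × ℝ → B) (p : H × ℝ) :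
    pderivFst F p = (fderiv ℝ F p).comp (ContinuousLinearMap.inl ℝ H ℝ) := rfl

lemma contDiffOn_pderivFst {B : Type} [NormedAddCommGroup B] [NormedSpace ℝ B]
    {F : H × ℝ → B} {W : Set (H × ℝ)} (hW : IsOpen W) (hF : ContDiffOn ℝ ∞ F W) :
    ContDiffOn ℝ ∞ (pderivFst F) W :=
  (hF.fderiv_of_isOpen hW le_rfl).clm_comp contDiffOn_const

lemma hasFDerivAt_partial {B : Type} [NormedAddCommGroup B] [NormedSpace ℝ B]
    {F : H × ℝ → B} {W : Set (H × ℝ)} (hW : IsOpen W) (hF : ContDiffOn ℝ ∞ F W)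
    {x : H} {t : ℝ} (hp : (x, t) ∈ W) :
    HasFDerivAt (fun y => F (y, t)) (pderivFst F (x, t)) x := by
  have hdF : HasFDerivAt F (fderiv ℝ F (x, t)) (x, t) :=
    ((hF.contDiffAt (hW.mem_nhds hp)).differentiableAt (by norm_num)).hasFDerivAt
  have hmk : HasFDerivAt (fun y : H => (y, t)) (ContinuousLinearMap.inl ℝ H ℝ) x := by
    exact (hasFDerivAt_id x).prodMk (hasFDerivAt_const t x)
  exact hdF.comp x hmk

/-- Differentiation under the integral sign for a smooth integrand on a product open set. -/
lemma hasFDerivAt_parametric {B : Type} [NormedAddCommGroup B] [NormedSpace ℝ B]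
    {O : Set H} (hO : IsOpen O) {J : Set ℝ} (hJ : IsOpen J) (hJ1 : Icc (0:ℝ) 1 ⊆ J)
    {F : H × ℝ → B} (hF : ContDiffOn ℝ ∞ F (O ×ˢ J)) {x₀ : H} (hx₀ : x₀ ∈ O) :
    HasFDerivAt (fun x => ∫ t in (0:ℝ)..1, F (x, t))
      (∫ t in (0:ℝ)..1, pderivFst F (x₀, t)) x₀ := by
  have hOJ : IsOpen (O ×ˢ J) := hO.prod hJ
  obtain ⟨ε, εpos, hball⟩ : ∃ ε > 0, closedBall x₀ ε ⊆ O :=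
    (nhds_basis_closedBall.mem_iff).1 (hO.mem_nhds hx₀)
  have hDF : ContDiffOn ℝ ∞ (pderivFst F) (O ×ˢ J) := contDiffOn_pderivFst hOJ hF
  have hDFc : ContinuousOn (pderivFst F) (O ×ˢ J) := hDF.continuousOn
  -- compact set and bound
  have hK : IsCompact ((closedBall x₀ ε) ×ˢ (Icc (0:ℝ) 1)) :=
    (isCompact_closedBall x₀ ε).prod isCompact_Icc
  have hKsub : (closedBall x₀ ε) ×ˢ (Icc (0:ℝ) 1) ⊆ O ×ˢ J :=
    prod_mono hball hJ1
  obtain ⟨C, hC⟩ := hK.exists_bound_of_continuousOn (hDFc.mono hKsub)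
  have hIsub : Set.uIoc (0:ℝ) 1 ⊆ Icc 0 1 := by
    rw [uIoc_of_le (by norm_num : (0:ℝ) ≤ 1)]
    exact Ioc_subset_Icc_self
  have Ficont : ∀ x ∈ O, ContinuousOn (fun t => F (x, t)) (Icc (0:ℝ) 1) := by
    intro x hx
    apply (hF.continuousOn).comp (Continuous.continuousOn (by fun_prop))
    intro t ht
    exact ⟨hx, hJ1 ht⟩
  have DFicont : ∀ x ∈ O, ContinuousOn (fun t => pderivFst F (x, t)) (Icc (0:ℝ) 1) := by
    intro x hx
    apply hDFc.comp (Continuous.continuousOn (by fun_prop))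
    intro t ht
    exact ⟨hx, hJ1 ht⟩
  apply intervalIntegral.hasFDerivAt_integral_of_dominated_of_fderiv_le
    (F' := fun x t => pderivFst F (x, t)) (bound := fun _ => C) (ball_mem_nhds x₀ εpos)
  · filter_upwards [hO.mem_nhds hx₀] with x hx
    exact ((Ficont x hx).mono hIsub).aestronglyMeasurable measurableSet_uIoc
  · refine ContinuousOn.intervalIntegrable ?_
    rw [uIcc_of_le (by norm_num : (0:ℝ) ≤ 1)]
    exact Ficont x₀ hx₀
  · exact ((DFicont x₀ hx₀).mono hIsub).aestronglyMeasurable measurableSet_uIoc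
  · apply Filter.Eventually.of_forall
    intro t ht x hx
    exact hC _ ⟨ball_subset_closedBall hx, hIsub ht⟩
  · exact intervalIntegrable_const
  · apply Filter.Eventually.of_forall
    intro t ht x hx
    exact hasFDerivAt_partial hOJ hF ⟨hball (ball_subset_closedBall hx), hJ1 (hIsub ht)⟩

lemma contDiffOn_parametric :
    ∀ (k : ℕ) {B : Type} [NormedAddCommGroup B] [NormedSpace ℝ B]
      {O : Set H} (_ : IsOpen O) {J : Set ℝ} (_ : IsOpen J) (_ : Icc (0:ℝ) 1 ⊆ J)
      {F : H × ℝ → B} (_ : ContDiffOn ℝ ∞ F (O ×ˢ J)),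
      ContDiffOn ℝ k (fun x => ∫ t in (0:ℝ)..1, F (x, t)) O := by
  intro k
  induction k with
  | zero =>
    intro B _ _ O hO J hJ hJ1 F hF
    rw [CharP.cast_eq_zero, contDiffOn_zero]
    intro x hx
    exact (hasFDerivAt_parametric hO hJ hJ1 hF hx).continuousAt.continuousWithinAt
  | succ k ih =>
    intro B _ _ O hO J hJ hJ1 F hF
    have hdiff : ∀ x ∈ O, HasFDerivAt (fun x => ∫ t in (0:ℝ)..1, F (x, t))
        (∫ t in (0:ℝ)..1, pderivFst F (x, t)) x :=
      fun x hx => hasFDerivAt_parametric hO hJ hJ1 hF hx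
    have : ((k + 1 : ℕ) : WithTop ℕ∞) = (k : WithTop ℕ∞) + 1 := by push_cast; ring
    rw [this, contDiffOn_succ_iff_fderiv_of_isOpen hO]
    refine ⟨fun x hx => (hdiff x hx).differentiableAt.differentiableWithinAt, ?_, ?_⟩
    · intro h; exact absurd h (by simp)
    · have hDF : ContDiffOn ℝ ∞ (pderivFst F) (O ×ˢ J) :=
        contDiffOn_pderivFst (hO.prod hJ) hF
      have := ih hO hJ hJ1 hDF
      refine this.congr fun x hx => ?_
      exact (hdiff x hx).fderiv

-- direction derivative and vanish propagation
section PartC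
variable {n : ℕ}

/-- directional derivative -/
def dirD (n : ℕ) (j : Fin n) (f : (Fin n → ℝ) → ℝ) : (Fin n → ℝ) → ℝ :=
  fun y => fderiv ℝ f y (Pi.single j 1)

lemma contDiffOn_dirD {V : Set (Fin n → ℝ)} (hV : IsOpen V) (j : Fin n)
    {f : (Fin n → ℝ) → ℝ} (hf : ContDiffOn ℝ ∞ f V) :
    ContDiffOn ℝ ∞ (dirD n j f) V :=
  (hf.fderiv_of_isOpen hV le_rfl).clm_apply contDiffOn_const

lemma vanish_propagate {V : Set (Fin n → ℝ)} (hV : IsOpen V) (k : ℕ) {j : Fin n}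
    (hjk : (j : ℕ) < k) {u : (Fin n → ℝ) → ℝ} (hu : ContDiffOn ℝ ∞ u V)
    (h0 : ∀ y ∈ V, hh n n k y = 0 → u y = 0 ∧ fderiv ℝ u y = 0) :
    ∀ y ∈ V, hh n n k y = 0 →
      dirD n j u y = 0 ∧ fderiv ℝ (dirD n j u) y = 0 := by
  intro y hy hky
  have hA : ContDiffOn ℝ ∞ (fderiv ℝ u) V := hu.fderiv_of_isOpen hV le_rfl
  have hBy : HasFDerivAt (fderiv ℝ u) (fderiv ℝ (fderiv ℝ u) y) y :=
    ((hA.contDiffAt (hV.mem_nhds hy)).differentiableAt (by norm_num)).hasFDerivAt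
  constructor
  · show fderiv ℝ u y (Pi.single j 1) = 0
    rw [(h0 y hy hky).2]; rfl
  -- claim 1 : derivative of fderiv u along e_j vanishes
  have hcurve : HasDerivAt (fun s : ℝ => y + s • (Pi.single j 1 : Fin n → ℝ))
      (Pi.single j 1) 0 := by
    simpa using ((hasDerivAt_id (0 : ℝ)).smul_const (Pi.single j 1 : Fin n → ℝ)).const_add y
  have hcomp : HasDerivAt (fun s : ℝ => fderiv ℝ u (y + s • (Pi.single j 1 : Fin n → ℝ)))
      (fderiv ℝ (fderiv ℝ u) y (Pi.single j 1)) 0 := by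
    have hBy' : HasFDerivAt (fderiv ℝ u) (fderiv ℝ (fderiv ℝ u) y)
        (y + (0:ℝ) • (Pi.single j 1 : Fin n → ℝ)) := by simpa using hBy
    exact hBy'.comp_hasDerivAt 0 hcurve
  have hev : ∀ᶠ s : ℝ in nhds 0,
      fderiv ℝ u (y + s • (Pi.single j 1 : Fin n → ℝ)) = 0 := by
    have hcont : Continuous (fun s : ℝ => y + s • (Pi.single j 1 : Fin n → ℝ)) := by fun_prop
    have hmem : ∀ᶠ s : ℝ in nhds 0, (y + s • (Pi.single j 1 : Fin n → ℝ)) ∈ V := by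
      have h1 : ContinuousAt (fun s : ℝ => y + s • (Pi.single j 1 : Fin n → ℝ)) 0 :=
        hcont.continuousAt
      apply h1.preimage_mem_nhds
      simpa using hV.mem_nhds hy
    filter_upwards [hmem] with s hs
    refine (h0 _ hs ?_).2
    rw [add_single_eq_update, hh_update _ _ _ hjk]
    exact hky
  have claim1 : fderiv ℝ (fderiv ℝ u) y (Pi.single j 1) = 0 := by
    have h2 : HasDerivAt (fun _ : ℝ => (0 : (Fin n → ℝ) →L[ℝ] ℝ))
        (fderiv ℝ (fderiv ℝ u) y (Pi.single j 1)) 0 := by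
      apply hcomp.congr_of_eventuallyEq
      filter_upwards [hev] with s hs
      exact hs.symm
    exact (h2.unique (hasDerivAt_const 0 0))
  -- claim 2 : with symmetry of second derivatives
  have hev2 : ∀ᶠ z in nhds y, HasFDerivAt u (fderiv ℝ u z) z := by
    filter_upwards [hV.mem_nhds hy] with z hz
    exact ((hu.contDiffAt (hV.mem_nhds hz)).differentiableAt (by norm_num)).hasFDerivAt
  have symm := second_derivative_symmetric_of_eventually hev2 hBy
  have happly : HasFDerivAt (⇑(ContinuousLinearMap.apply ℝ ℝ (Pi.single j 1)) ∘ fderiv ℝ u)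
      ((ContinuousLinearMap.apply ℝ ℝ (Pi.single j 1)).comp (fderiv ℝ (fderiv ℝ u) y)) y :=
    ((ContinuousLinearMap.apply ℝ ℝ (Pi.single j 1)).hasFDerivAt).comp y hBy
  have hdirD : dirD n j u = ⇑(ContinuousLinearMap.apply ℝ ℝ (Pi.single j 1)) ∘ fderiv ℝ u := by
    funext z; rfl
  rw [hdirD, happly.fderiv]
  ext v
  have : fderiv ℝ (fderiv ℝ u) y v (Pi.single j 1)
      = fderiv ℝ (fderiv ℝ u) y (Pi.single j 1) v := symm v _
  simp only [ContinuousLinearMap.coe_comp', Function.comp_apply,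
    ContinuousLinearMap.apply_apply, ContinuousLinearMap.zero_apply]
  rw [this, claim1]
  rfl

/-- the deformation map pushing coordinate `j` towards the graph -/
def psiMap (n : ℕ) (j : Fin n) : (Fin n → ℝ) × ℝ → (Fin n → ℝ) :=
  fun p => p.1 + ((p.2 - 1) * (p.1 j - (hh n n ((j : ℕ) + 1) p.1) ^ 2)) • Pi.single j 1

def intF (n : ℕ) (j : Fin n) (f : (Fin n → ℝ) → ℝ) : (Fin n → ℝ) × ℝ → ℝ :=
  fun p => (1 - p.2) * dirD n j (dirD n j f) (psiMap n j p)

def qF (n : ℕ) (j : Fin n) (f : (Fin n → ℝ) → ℝ) : (Fin n → ℝ) → ℝ :=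
  fun x => ∫ t in (0:ℝ)..1, intF n j f (x, t)

lemma intF_apply (j : Fin n) (f : (Fin n → ℝ) → ℝ) (p : (Fin n → ℝ) × ℝ) :
    intF n j f p = (1 - p.2) * dirD n j (dirD n j f) (psiMap n j p) := rfl

lemma qF_apply (j : Fin n) (f : (Fin n → ℝ) → ℝ) (x : Fin n → ℝ) :
    qF n j f x = ∫ t in (0:ℝ)..1, intF n j f (x, t) := rfl

lemma contDiff_psiMap (j : Fin n) : ContDiff ℝ ∞ (psiMap n j) := by
  apply ContDiff.add contDiff_fst
  show ContDiff ℝ ∞ ((fun x : (Fin n → ℝ) × ℝ => (x.2 - 1) * (x.1 j - hh n n ((j : ℕ) + 1) x.1 ^ 2)) • fun _ : (Fin n → ℝ) × ℝ => (Pi.single j 1 : Fin n → ℝ))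
  apply ContDiff.smul _ contDiff_const
  apply ContDiff.mul
  · exact contDiff_snd.sub contDiff_const
  · exact (((ContinuousLinearMap.proj (R := ℝ) (φ := fun _ : Fin n => ℝ) j).contDiff).comp
      contDiff_fst).sub (((contDiff_hh n ((j : ℕ) + 1)).pow 2).comp contDiff_fst)

lemma psiMap_update (j : Fin n) (p : (Fin n → ℝ) × ℝ) :
    psiMap n j p = Function.update p.1 j
      (p.1 j + (p.2 - 1) * (p.1 j - (hh n n ((j : ℕ) + 1) p.1) ^ 2)) :=
  add_single_eq_update _ _ _

lemma psiMap_hh {k : ℕ} (j : Fin n) (hk : (j : ℕ) < k) (p : (Fin n → ℝ) × ℝ) :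
    hh n n k (psiMap n j p) = hh n n k p.1 := by
  rw [psiMap_update, hh_update _ _ _ hk]

lemma psiMap_zero (j : Fin n) (x : Fin n → ℝ) :
    hh n n (j : ℕ) (psiMap n j (x, 0)) = 0 := by
  have hj : (j : ℕ) < n := j.2
  rw [hh_succ hj, psiMap_update]
  have h1 : (Function.update x j (x j + ((0:ℝ) - 1) * (x j - (hh n n ((j:ℕ) + 1) x) ^ 2)))
      ⟨(j : ℕ), hj⟩ = (hh n n ((j:ℕ) + 1) x) ^ 2 := by
    have : (⟨(j : ℕ), hj⟩ : Fin n) = j := by ext; rfl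
    rw [this, Function.update_self]
    ring
  rw [h1, hh_update _ _ _ (Nat.lt_succ_self _)]
  ring

end PartC

section PartD
variable {n : ℕ}

lemma div_step {a : ℝ} (ha : 0 < a)
    (hφ : ∀ x ∈ ball (0 : Fin n → ℝ) a, ∀ j, j < n → (hh n n (j + 1) x) ^ 2 < a)
    {m : ℕ} (hm : m < n) {f : (Fin n → ℝ) → ℝ}
    (hf : ContDiffOn ℝ ∞ f (ball (0 : Fin n → ℝ) a))
    (hvan : ∀ k, m ≤ k → k < n → ∀ x ∈ ball (0 : Fin n → ℝ) a, hh n n k x = 0 →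
      f x = 0 ∧ fderiv ℝ f x = 0) :
    ∃ q : (Fin n → ℝ) → ℝ, ContDiffOn ℝ ∞ q (ball (0 : Fin n → ℝ) a) ∧
      (∀ x ∈ ball (0 : Fin n → ℝ) a, f x = (hh n n m x) ^ 2 * q x) ∧
      (∀ k, m + 1 ≤ k → k < n → ∀ x ∈ ball (0 : Fin n → ℝ) a, hh n n k x = 0 →
        q x = 0 ∧ fderiv ℝ q x = 0) := by
  have hVopen : IsOpen (ball (0 : Fin n → ℝ) a) := isOpen_ball
  set V : Set (Fin n → ℝ) := ball (0 : Fin n → ℝ) a with hVdef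
  set jm : Fin n := ⟨m, hm⟩ with hjmdef
  -- membership of the deformation in V
  have hΨmem : ∀ x ∈ V, ∀ t ∈ Icc (0:ℝ) 1, psiMap n jm (x, t) ∈ V := by
    intro x hx t ht
    have hx' : ‖x‖ < a := mem_ball_zero_iff.1 hx
    rw [hVdef, mem_ball_zero_iff, pi_norm_lt_iff ha]
    intro i
    by_cases hi : i = jm
    · subst hi
      have hcoord : psiMap n jm (x, t) jm
          = t * x jm + (1 - t) * ((hh n n (m + 1) x) ^ 2) := by
        simp only [psiMap, Pi.add_apply, Pi.smul_apply, Pi.single_eq_same, smul_eq_mul]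
        ring
      rw [hcoord]
      have h1 : |x jm| < a := by
        have := norm_le_pi_norm x jm
        rw [Real.norm_eq_abs] at this
        linarith
      have h2 : |(hh n n (m + 1) x) ^ 2| < a := by
        rw [abs_of_nonneg (by positivity)]
        exact hφ x hx m hm
      obtain ⟨ht0, ht1⟩ := ht
      rw [abs_lt] at h1 h2
      rw [Real.norm_eq_abs, abs_lt]
      rcases eq_or_lt_of_le ht1 with h | h
      · subst h
        constructor <;> nlinarith [h1.1, h1.2]
      · have e1 : t * (x jm - a) ≤ 0 :=
          mul_nonpos_of_nonneg_of_nonpos ht0 (by linarith [h1.2])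
        have e2 : (1 - t) * (hh n n (m + 1) x ^ 2 - a) < 0 :=
          mul_neg_of_pos_of_neg (by linarith) (by linarith [h2.2])
        have e3 : 0 ≤ t * (x jm + a) :=
          mul_nonneg ht0 (by linarith [h1.1])
        have e4 : 0 < (1 - t) * (hh n n (m + 1) x ^ 2 + a) :=
          mul_pos (by linarith) (by linarith [h2.1])
        constructor <;> nlinarith [e1, e2, e3, e4]
    · have hcoord : psiMap n jm (x, t) i = x i := by
        simp [psiMap, Pi.single_apply, hi]
      rw [Real.norm_eq_abs, hcoord]
      have := norm_le_pi_norm x i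
      rw [Real.norm_eq_abs] at this
      linarith
  -- the open set W on which the integrand is smooth
  set W : Set ((Fin n → ℝ) × ℝ) := (Prod.fst ⁻¹' V) ∩ (psiMap n jm ⁻¹' V) with hWdef
  have hWopen : IsOpen W :=
    (hVopen.preimage continuous_fst).inter (hVopen.preimage (contDiff_psiMap jm).continuous)
  have hD2f : ContDiffOn ℝ ∞ (dirD n jm (dirD n jm f)) V :=
    contDiffOn_dirD hVopen jm (contDiffOn_dirD hVopen jm hf)
  have hFW : ContDiffOn ℝ ∞ (intF n jm f) W := by
    apply ContDiffOn.mul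
    · exact (contDiff_const.sub contDiff_snd).contDiffOn
    · exact hD2f.comp ((contDiff_psiMap jm).contDiffOn) (fun p hp => hp.2)
  -- tube construction
  have tube : ∀ x₀ ∈ V, ∃ (O₂ : Set (Fin n → ℝ)) (J : Set ℝ), IsOpen O₂ ∧ IsOpen J ∧
      x₀ ∈ O₂ ∧ Icc (0:ℝ) 1 ⊆ J ∧ O₂ ⊆ V ∧ O₂ ×ˢ J ⊆ W := by
    intro x₀ hx₀
    have hsub : ({x₀} : Set (Fin n → ℝ)) ×ˢ Icc (0:ℝ) 1 ⊆ W := by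
      rintro ⟨x, t⟩ ⟨hx, ht⟩
      rw [mem_singleton_iff] at hx
      subst hx
      exact ⟨hx₀, hΨmem _ hx₀ t ht⟩
    obtain ⟨O₁, J, hO₁, hJ, hxO₁, hIccJ, hprod⟩ :=
      generalized_tube_lemma isCompact_singleton isCompact_Icc hWopen hsub
    refine ⟨O₁ ∩ V, J, hO₁.inter hVopen, hJ, ⟨singleton_subset_iff.1 hxO₁, hx₀⟩, hIccJ,
      inter_subset_right, ?_⟩
    exact (prod_mono inter_subset_left le_rfl).trans hprod
  -- smoothness of q
  have hqsm : ContDiffOn ℝ ∞ (qF n jm f) V := by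
    intro x₀ hx₀
    obtain ⟨O₂, J, hO₂, hJ, hxO₂, hIccJ, hO₂V, hOJW⟩ := tube x₀ hx₀
    have hQ : ContDiffOn ℝ ∞ (qF n jm f) O₂ := by
      rw [contDiffOn_infty]
      intro k
      exact contDiffOn_parametric k hO₂ hJ hIccJ (hFW.mono hOJW)
    exact (hQ.contDiffAt (hO₂.mem_nhds hxO₂)).contDiffWithinAt
  -- derivative of q
  have hqderiv : ∀ x ∈ V, HasFDerivAt (qF n jm f)
      (∫ t in (0:ℝ)..1, pderivFst (intF n jm f) (x, t)) x := by
    intro x hx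
    obtain ⟨O₂, J, hO₂, hJ, hxO₂, hIccJ, hO₂V, hOJW⟩ := tube x hx
    exact hasFDerivAt_parametric hO₂ hJ hIccJ (hFW.mono hOJW) hxO₂
  -- differentiability pack
  have hfd : ∀ y ∈ V, HasFDerivAt f (fderiv ℝ f y) y := fun y hy =>
    ((hf.contDiffAt (hVopen.mem_nhds hy)).differentiableAt (by norm_num)).hasFDerivAt
  have hDf : ContDiffOn ℝ ∞ (dirD n jm f) V := contDiffOn_dirD hVopen jm hf
  have hDfd : ∀ y ∈ V, HasFDerivAt (dirD n jm f) (fderiv ℝ (dirD n jm f) y) y := fun y hy =>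
    ((hDf.contDiffAt (hVopen.mem_nhds hy)).differentiableAt (by norm_num)).hasFDerivAt
  -- Taylor identity
  have hTaylor : ∀ x ∈ V, f x = (hh n n m x) ^ 2 * qF n jm f x := by
    intro x hx
    set b : ℝ := hh n n m x with hbdef
    have hbval : x jm - (hh n n (m + 1) x) ^ 2 = b := (hh_succ hm x).symm
    set γ : ℝ → (Fin n → ℝ) := fun t => x + ((t - 1) * b) • (Pi.single jm 1 : Fin n → ℝ)
      with hγdef
    have hγΨ : ∀ t : ℝ, psiMap n jm (x, t) = γ t := by
      intro t
      simp only [psiMap, hγdef]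
      rw [show ((jm : ℕ) + 1) = m + 1 by simp [hjmdef], hbval]
    have hγmem : ∀ t ∈ Icc (0:ℝ) 1, γ t ∈ V := by
      intro t ht
      rw [← hγΨ t]
      exact hΨmem x hx t ht
    have hγder : ∀ t : ℝ, HasDerivAt γ (b • (Pi.single jm 1 : Fin n → ℝ)) t := by
      intro t
      have h1 : HasDerivAt (fun t : ℝ => ((t - 1) * b)) b t := by
        simpa using ((hasDerivAt_id t).sub_const 1).mul_const b
      exact (h1.smul_const (Pi.single jm 1 : Fin n → ℝ)).const_add x
    have hχ : ∀ t ∈ Icc (0:ℝ) 1,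
        HasDerivAt (fun s => f (γ s)) (b * dirD n jm f (γ t)) t := by
      intro t ht
      have h2 := (hfd (γ t) (hγmem t ht)).comp_hasDerivAt t (hγder t)
      have h3 : fderiv ℝ f (γ t) (b • (Pi.single jm 1 : Fin n → ℝ))
          = b * dirD n jm f (γ t) := by
        rw [(fderiv ℝ f (γ t)).map_smul]; rfl
      rwa [h3] at h2
    have hχ' : ∀ t ∈ Icc (0:ℝ) 1,
        HasDerivAt (fun s => b * dirD n jm f (γ s))
          (b * (b * dirD n jm (dirD n jm f) (γ t))) t := by
      intro t ht
      have h2 := (hDfd (γ t) (hγmem t ht)).comp_hasDerivAt t (hγder t)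
      have h3 : fderiv ℝ (dirD n jm f) (γ t) (b • (Pi.single jm 1 : Fin n → ℝ))
          = b * dirD n jm (dirD n jm f) (γ t) := by
        rw [(fderiv ℝ (dirD n jm f) (γ t)).map_smul]; rfl
      rw [h3] at h2
      exact h2.const_mul b
    set ρ : ℝ → ℝ := fun t => f (γ t) + (1 - t) * (b * dirD n jm f (γ t)) with hρdef
    have hρder : ∀ t ∈ Icc (0:ℝ) 1,
        HasDerivAt ρ ((1 - t) * (b ^ 2 * dirD n jm (dirD n jm f) (γ t))) t := by
      intro t ht
      have h2 : HasDerivAt (fun s : ℝ => (1 - s)) (-1) t := by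
        simpa using (hasDerivAt_id t).const_sub (1:ℝ)
      have h3 := h2.fun_mul (hχ' t ht)
      have h4 := (hχ t ht).fun_add h3
      exact h4.congr_deriv (by ring)
    have hcont : ContinuousOn (fun t => (1 - t) * (b ^ 2 * dirD n jm (dirD n jm f) (γ t)))
        (Icc (0:ℝ) 1) := by
      apply ContinuousOn.mul
      · fun_prop
      · apply ContinuousOn.mul continuousOn_const
        exact (hD2f.continuousOn).comp (by fun_prop : Continuous γ).continuousOn hγmem
    have hFTC : ∫ t in (0:ℝ)..1, (1 - t) * (b ^ 2 * dirD n jm (dirD n jm f) (γ t))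
        = ρ 1 - ρ 0 := by
      apply intervalIntegral.integral_eq_sub_of_hasDerivAt
      · intro t ht
        rw [uIcc_of_le (by norm_num : (0:ℝ) ≤ 1)] at ht
        exact hρder t ht
      · apply ContinuousOn.intervalIntegrable
        rw [uIcc_of_le (by norm_num : (0:ℝ) ≤ 1)]
        exact hcont
    have hγ1 : γ 1 = x := by
      simp [hγdef]
    have hγ0mem : γ 0 ∈ V := hγmem 0 (by norm_num)
    have hγ0h : hh n n m (γ 0) = 0 := by
      rw [← hγΨ 0]
      have := psiMap_zero jm x
      rwa [show ((jm : ℕ)) = m by simp [hjmdef]] at this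
    have hvan0 := hvan m le_rfl hm (γ 0) hγ0mem hγ0h
    have hρ1 : ρ 1 = f x := by simp [hρdef, hγ1]
    have hρ0 : ρ 0 = 0 := by
      have hDf0 : dirD n jm f (γ 0) = 0 := by
        show fderiv ℝ f (γ 0) (Pi.single jm 1) = 0
        rw [hvan0.2]; rfl
      simp [hρdef, hvan0.1, hDf0]
    have hq : ∫ t in (0:ℝ)..1, (1 - t) * (b ^ 2 * dirD n jm (dirD n jm f) (γ t))
        = b ^ 2 * qF n jm f x := by
      rw [qF_apply, ← intervalIntegral.integral_const_mul]
      apply intervalIntegral.integral_congr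
      intro t ht
      show (1 - t) * (b ^ 2 * dirD n jm (dirD n jm f) (γ t))
        = b ^ 2 * intF n jm f (x, t)
      rw [intF_apply]
      show _ = b ^ 2 * ((1 - t) * dirD n jm (dirD n jm f) (psiMap n jm (x, t)))
      rw [hγΨ t]
      ring
    rw [← hbdef] at *
    calc f x = ρ 1 - ρ 0 := by rw [hρ1, hρ0]; ring
    _ = b ^ 2 * qF n jm f x := by rw [← hFTC, hq]
  -- vanishing of q on the higher hypersurfaces
  have hvanq : ∀ k, m + 1 ≤ k → k < n → ∀ x ∈ V, hh n n k x = 0 →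
      qF n jm f x = 0 ∧ fderiv ℝ (qF n jm f) x = 0 := by
    intro k hk1 hk2 x hx hhk
    have hjk : (jm : ℕ) < k := by
      simp only [hjmdef]
      omega
    have P1 := vanish_propagate hVopen k hjk hf
      (fun y hy hky => hvan k (by omega) hk2 y hy hky)
    have P2 := vanish_propagate hVopen k hjk hDf P1
    have hΨS : ∀ t ∈ Icc (0:ℝ) 1, psiMap n jm (x, t) ∈ V ∧ hh n n k (psiMap n jm (x, t)) = 0 := by
      intro t ht
      exact ⟨hΨmem x hx t ht, by rw [psiMap_hh jm hjk]; exact hhk⟩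
    constructor
    · have hzero : EqOn (fun t => intF n jm f (x, t)) (fun _ => (0:ℝ)) (uIcc (0:ℝ) 1) := by
        intro t ht
        rw [uIcc_of_le (by norm_num : (0:ℝ) ≤ 1)] at ht
        obtain ⟨hV', hk'⟩ := hΨS t ht
        show intF n jm f (x, t) = 0
        rw [intF_apply]
        show (1 - t) * dirD n jm (dirD n jm f) (psiMap n jm (x, t)) = 0
        rw [(P2 _ hV' hk').1]
        ring
      calc qF n jm f x = ∫ t in (0:ℝ)..1, (0:ℝ) := intervalIntegral.integral_congr hzero
      _ = 0 := by simp
    · rw [(hqderiv x hx).fderiv]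
      have hzero : EqOn (fun t => pderivFst (intF n jm f) (x, t))
          (fun _ => (0 : (Fin n → ℝ) →L[ℝ] ℝ)) (uIcc (0:ℝ) 1) := by
        intro t ht
        rw [uIcc_of_le (by norm_num : (0:ℝ) ≤ 1)] at ht
        obtain ⟨hV', hk'⟩ := hΨS t ht
        have hD2f0 : dirD n jm (dirD n jm f) (psiMap n jm (x, t)) = 0 := (P2 _ hV' hk').1
        have hD2f'0 : fderiv ℝ (dirD n jm (dirD n jm f)) (psiMap n jm (x, t)) = 0 :=
          (P2 _ hV' hk').2
        have hcomp : HasFDerivAt (fun p => dirD n jm (dirD n jm f) (psiMap n jm p))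
            (0 : ((Fin n → ℝ) × ℝ) →L[ℝ] ℝ) (x, t) := by
          have h1 : HasFDerivAt (dirD n jm (dirD n jm f)) (0 : (Fin n → ℝ) →L[ℝ] ℝ)
              (psiMap n jm (x, t)) := by
            have := ((hD2f.contDiffAt (hVopen.mem_nhds hV')).differentiableAt
              (by norm_num)).hasFDerivAt
            rwa [hD2f'0] at this
          have h2 : HasFDerivAt (psiMap n jm) (fderiv ℝ (psiMap n jm) (x, t)) (x, t) :=
            (((contDiff_psiMap jm).contDiffAt).differentiableAt (by norm_num)).hasFDerivAt
          have h3 := h1.comp (x, t) h2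
          rwa [ContinuousLinearMap.zero_comp] at h3
        have hmul : HasFDerivAt (intF n jm f) (0 : ((Fin n → ℝ) × ℝ) →L[ℝ] ℝ) (x, t) := by
          have h3 : HasFDerivAt (fun p : (Fin n → ℝ) × ℝ => 1 - p.2)
              (0 - ContinuousLinearMap.snd ℝ (Fin n → ℝ) ℝ) (x, t) :=
            (hasFDerivAt_const 1 _).sub hasFDerivAt_snd
          have h4 := h3.fun_mul hcomp
          have : intF n jm f = fun p : (Fin n → ℝ) × ℝ =>
              (1 - p.2) * dirD n jm (dirD n jm f) (psiMap n jm p) := rfl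
          rw [this]
          exact h4.congr_fderiv (by rw [hD2f0]; simp)
        show pderivFst (intF n jm f) (x, t) = 0
        rw [pderivFst_apply, hmul.fderiv, ContinuousLinearMap.zero_comp]
      calc (∫ t in (0:ℝ)..1, pderivFst (intF n jm f) (x, t))
          = ∫ _ in (0:ℝ)..1, (0 : (Fin n → ℝ) →L[ℝ] ℝ) :=
        intervalIntegral.integral_congr hzero
      _ = 0 := by simp
  exact ⟨qF n jm f, hqsm, hTaylor, hvanq⟩

end PartD

section PartE
variable {n : ℕ}

lemma main_div {a : ℝ} (ha : 0 < a)
    (hφ : ∀ x ∈ ball (0 : Fin n → ℝ) a, ∀ j, j < n → (hh n n (j + 1) x) ^ 2 < a) :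
    ∀ (d m : ℕ), n - m ≤ d → ∀ f : (Fin n → ℝ) → ℝ,
      ContDiffOn ℝ ∞ f (ball (0 : Fin n → ℝ) a) →
      (∀ k, m ≤ k → k < n → ∀ x ∈ ball (0 : Fin n → ℝ) a, hh n n k x = 0 →
        f x = 0 ∧ fderiv ℝ f x = 0) →
      ∃ q : (Fin n → ℝ) → ℝ, ContDiffOn ℝ ∞ q (ball (0 : Fin n → ℝ) a) ∧
        ∀ x ∈ ball (0 : Fin n → ℝ) a,
          f x = (∏ k ∈ Finset.Ico m n, (hh n n k x) ^ 2) * q x := by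
  intro d
  induction d with
  | zero =>
    intro m hd f hf _
    refine ⟨f, hf, fun x hx => ?_⟩
    rw [Finset.Ico_eq_empty (by omega), Finset.prod_empty, one_mul]
  | succ d ih =>
    intro m hd f hf hvan
    by_cases hm : m < n
    · obtain ⟨q₁, hq₁sm, hq₁eq, hq₁van⟩ := div_step ha hφ hm hf hvan
      obtain ⟨q, hqsm, hqeq⟩ := ih (m + 1) (by omega) q₁ hq₁sm hq₁van
      refine ⟨q, hqsm, fun x hx => ?_⟩
      rw [hq₁eq x hx, hqeq x hx, Finset.prod_eq_prod_Ico_succ_bot hm]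
      ring
    · refine ⟨f, hf, fun x hx => ?_⟩
      rw [Finset.Ico_eq_empty (by omega), Finset.prod_empty, one_mul]

end PartE


/-- Let `n ≥ 2`, `U` an open neighborhood of `0 ∈ ℝⁿ`, and `g` a `C^∞`
function on `U`.  Assume (i) `g = 0` and `∇g = 0` at every point of `U` with `h_n = 0`, and
(ii) for each `j = 1, …, n-1`, `g = h_n²` and `∇g = ∇(h_n²)` at every point of `U` with
`h_{n,j} = 0`.  Then there are an open neighborhood `V ⊆ U` of `0` and a `C^∞` function `β` on
`V` with `g = (1 + β ∏_{j=1}^{n-1} h_{n,j}²) h_n²` on `V`. -/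
theorem stmt_16 (n : ℕ) (hn : 2 ≤ n) (U : Set (Fin n → ℝ)) (hU : IsOpen U)
    (h0U : (0 : Fin n → ℝ) ∈ U) (g : (Fin n → ℝ) → ℝ) (hg : ContDiffOn ℝ ∞ g U)
    (h1 : ∀ x ∈ U, hh n n 0 x = 0 → g x = 0 ∧ fderiv ℝ g x = 0)
    (h2 : ∀ j : ℕ, 1 ≤ j → j < n → ∀ x ∈ U, hh n n j x = 0 →
      g x = (hh n n 0 x) ^ 2 ∧
      fderiv ℝ g x = fderiv ℝ (fun y => (hh n n 0 y) ^ 2) x) :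
    ∃ V : Set (Fin n → ℝ), IsOpen V ∧ (0 : Fin n → ℝ) ∈ V ∧ V ⊆ U ∧
      ∃ β : (Fin n → ℝ) → ℝ, ContDiffOn ℝ ∞ β V ∧
        ∀ x ∈ V,
          g x = (1 + β x * ∏ j ∈ Finset.Ico 1 n, (hh n n j x) ^ 2) * (hh n n 0 x) ^ 2 := by
  obtain ⟨r₁, hr₁, hr₁U⟩ := Metric.isOpen_iff.1 hU 0 h0U
  -- the vector of all the hh functions; a local Lipschitz bound near 0
  have hGsm : ContDiff ℝ ∞ (fun x (j : Fin n) => hh n n ((j : ℕ) + 1) x) :=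
    contDiff_pi.2 fun j => contDiff_hh n ((j : ℕ) + 1)
  have hG0 : (fun (j : Fin n) => hh n n ((j : ℕ) + 1) (0 : Fin n → ℝ)) = 0 :=
    funext fun j => hh_zero n ((j : ℕ) + 1)
  obtain ⟨K, s, hs, hlip⟩ :=
    ((hGsm.of_le (by norm_num : (1 : WithTop ℕ∞) ≤ ∞)).contDiffAt (x := 0)).exists_lipschitzOnWith
  obtain ⟨δ, hδ, hδs⟩ := Metric.mem_nhds_iff.1 hs
  set a : ℝ := min r₁ (min δ (1 / ((K : ℝ) ^ 2 + 1))) with hadef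
  have hKpos : (0 : ℝ) < (K : ℝ) ^ 2 + 1 := by positivity
  have ha : 0 < a := by
    apply lt_min hr₁ (lt_min hδ _)
    positivity
  have haK : a * ((K : ℝ) ^ 2 + 1) ≤ 1 := by
    have h3 : a ≤ 1 / ((K : ℝ) ^ 2 + 1) := le_trans (min_le_right _ _) (min_le_right _ _)
    rw [le_div_iff₀ hKpos] at h3
    exact h3
  have hsubU : ball (0 : Fin n → ℝ) a ⊆ U :=
    (ball_subset_ball (min_le_left _ _)).trans hr₁U
  -- the key smallness estimate
  have hφ : ∀ x ∈ ball (0 : Fin n → ℝ) a, ∀ j, j < n → (hh n n (j + 1) x) ^ 2 < a := by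
    intro x hx j hj
    have hx' : ‖x‖ < a := mem_ball_zero_iff.1 hx
    have hxs : x ∈ s := by
      apply hδs
      rw [mem_ball_zero_iff]
      exact lt_of_lt_of_le hx' (le_trans (min_le_right _ _) (min_le_left _ _))
    have h0s : (0 : Fin n → ℝ) ∈ s := hδs (mem_ball_self hδ)
    have hdist := hlip.dist_le_mul x hxs 0 h0s
    set jF : Fin n := ⟨j, hj⟩ with hjF
    have hcoord : |hh n n (j + 1) x| ≤ (K : ℝ) * ‖x‖ := by
      have h4 : dist (hh n n ((jF : ℕ) + 1) x) (hh n n ((jF : ℕ) + 1) (0 : Fin n → ℝ))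
          ≤ dist (fun (j : Fin n) => hh n n ((j : ℕ) + 1) x)
            (fun (j : Fin n) => hh n n ((j : ℕ) + 1) (0 : Fin n → ℝ)) := by
        exact dist_le_pi_dist (fun (j : Fin n) => hh n n ((j : ℕ) + 1) x)
          (fun (j : Fin n) => hh n n ((j : ℕ) + 1) (0 : Fin n → ℝ)) jF
      have h5 : (jF : ℕ) = j := rfl
      rw [h5, hh_zero] at h4
      have h6 : dist (0 : Fin n → ℝ) (0 : Fin n → ℝ) = 0 := dist_self 0
      calc |hh n n (j + 1) x| = dist (hh n n (j + 1) x) 0 := by rw [Real.dist_eq, sub_zero]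
      _ ≤ dist (fun (j : Fin n) => hh n n ((j : ℕ) + 1) x)
            (fun (j : Fin n) => hh n n ((j : ℕ) + 1) (0 : Fin n → ℝ)) := h4
      _ ≤ (K : ℝ) * dist x 0 := hdist
      _ = (K : ℝ) * ‖x‖ := by rw [dist_zero_right]
    have hKnn : (0 : ℝ) ≤ (K : ℝ) := K.coe_nonneg
    have e1 : |hh n n (j + 1) x| * |hh n n (j + 1) x| ≤ ((K : ℝ) * ‖x‖) * ((K : ℝ) * ‖x‖) :=
      mul_self_le_mul_self (abs_nonneg _) hcoord
    have e2 : ‖x‖ * ‖x‖ < a * a := mul_self_lt_mul_self (norm_nonneg x) hx'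
    have e3 : (K : ℝ) ^ 2 * (‖x‖ * ‖x‖) ≤ (K : ℝ) ^ 2 * (a * a) := by nlinarith [sq_nonneg (K : ℝ)]
    nlinarith [sq_abs (hh n n (j + 1) x), e1, e3, ha, haK, sq_nonneg a]
  -- apply the division machine to g - h₀²
  have hF₀sm : ContDiffOn ℝ ∞ (fun x => g x - (hh n n 0 x) ^ 2) (ball (0 : Fin n → ℝ) a) :=
    (hg.mono hsubU).sub ((contDiff_hh n 0).pow 2).contDiffOn
  have hhd : ∀ x : Fin n → ℝ, HasFDerivAt (hh n n 0) (fderiv ℝ (hh n n 0) x) x := fun x =>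
    ((contDiff_hh n 0).differentiable (by norm_num)).differentiableAt.hasFDerivAt
  have hsqd : ∀ x : Fin n → ℝ,
      HasFDerivAt (fun y => (hh n n 0 y) ^ 2)
        (hh n n 0 x • fderiv ℝ (hh n n 0) x + hh n n 0 x • fderiv ℝ (hh n n 0) x) x := by
    intro x
    have heq : (fun y => (hh n n 0 y) ^ 2) = fun y => hh n n 0 y * hh n n 0 y :=
      funext fun y => pow_two _
    rw [heq]
    exact (hhd x).mul (hhd x)
  have hsq0 : ∀ x : Fin n → ℝ, hh n n 0 x = 0 →
      fderiv ℝ (fun y => (hh n n 0 y) ^ 2) x = 0 := by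
    intro x hx0
    rw [(hsqd x).fderiv, hx0]
    simp
  have hvan₀ : ∀ k, 0 ≤ k → k < n → ∀ x ∈ ball (0 : Fin n → ℝ) a, hh n n k x = 0 →
      (fun x => g x - (hh n n 0 x) ^ 2) x = 0 ∧
      fderiv ℝ (fun x => g x - (hh n n 0 x) ^ 2) x = 0 := by
    intro k _ hk2 x hx hxk
    have hxU : x ∈ U := hsubU hx
    have hgd : DifferentiableAt ℝ g x :=
      (hg.contDiffAt (hU.mem_nhds hxU)).differentiableAt (by norm_num)
    have hsd : DifferentiableAt ℝ (fun y => (hh n n 0 y) ^ 2) x := (hsqd x).differentiableAt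
    have hfder : fderiv ℝ (fun x => g x - (hh n n 0 x) ^ 2) x
        = fderiv ℝ g x - fderiv ℝ (fun y => (hh n n 0 y) ^ 2) x := fderiv_sub hgd hsd
    rcases Nat.eq_zero_or_pos k with hk0 | hk0
    · subst hk0
      obtain ⟨hg0, hg'0⟩ := h1 x hxU hxk
      constructor
      · simp [hg0, hxk]
      · rw [hfder, hg'0, hsq0 x hxk, sub_zero]
    · obtain ⟨hg0, hg'0⟩ := h2 k hk0 hk2 x hxU hxk
      constructor
      · simp [hg0]
      · rw [hfder, hg'0, sub_self]
  obtain ⟨β, hβsm, hβeq⟩ := main_div ha hφ n 0 (by omega) _ hF₀sm hvan₀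
  refine ⟨ball (0 : Fin n → ℝ) a, isOpen_ball, mem_ball_self ha, hsubU, β, hβsm, ?_⟩
  intro x hx
  have := hβeq x hx
  rw [Finset.prod_eq_prod_Ico_succ_bot (show 0 < n by omega)] at this
  linear_combination this
end
end

section
/- Let α be a C^∞ real-valued function defined on an open neighborhood of 0 ∈ ℝ with α(0) > 0. Then there exist open neighborhoods U, V of the origin in ℝ² and a C^∞ diffeomorphism ψ : U → V with ψ(0) = 0 such that ψ(U ∩ {(x_0, x_1) : x_0 = 0}) = V ∩ {(x_0, x_1) : x_0 = 0} and ψ(U ∩ {(x_0, x_1) : x_0 = α(x_1)·x_1²}) = V ∩ {(x_0, x_1) : x_0 = x_1²}. (This is the normalization of a graph with a nondegenerate quadratic tangency to the standard parabola, preserving the line {x_0 = 0}; it is the n = 1 case of the front-normalization theorem.) -/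
open scoped ContDiff

/-- Let `α` be a `C^∞` function on an open neighborhood `W` of `0 ∈ ℝ` with
`α 0 > 0`.  Then there are open neighborhoods `U, V` of the origin in `ℝ²` and a `C^∞`
diffeomorphism `ψ : U → V` with `ψ 0 = 0`, taking `U ∩ {x_0 = 0}` onto `V ∩ {x_0 = 0}` and
`U ∩ {x_0 = α(x_1) x_1²}` onto `V ∩ {x_0 = x_1²}`. -/
theorem stmt_17 (α : ℝ → ℝ) (W : Set ℝ) (hW : IsOpen W) (h0W : (0 : ℝ) ∈ W)
    (hα : ContDiffOn ℝ ∞ α W) (hpos : 0 < α 0) :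
    ∃ U V : Set (ℝ × ℝ), IsOpen U ∧ IsOpen V ∧
      (0 : ℝ × ℝ) ∈ U ∧ (0 : ℝ × ℝ) ∈ V ∧ U ⊆ Set.univ ×ˢ W ∧
      ∃ ψ φ : ℝ × ℝ → ℝ × ℝ,
        ContDiffOn ℝ ∞ ψ U ∧ ContDiffOn ℝ ∞ φ V ∧
        (∀ z ∈ U, ψ z ∈ V) ∧ (∀ z ∈ V, φ z ∈ U) ∧
        (∀ z ∈ U, φ (ψ z) = z) ∧ (∀ z ∈ V, ψ (φ z) = z) ∧
        ψ 0 = 0 ∧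
        ψ '' (U ∩ {z : ℝ × ℝ | z.1 = 0}) = V ∩ {z : ℝ × ℝ | z.1 = 0} ∧
        ψ '' (U ∩ {z : ℝ × ℝ | z.1 = α z.2 * z.2 ^ 2}) = V ∩ {z : ℝ × ℝ | z.1 = z.2 ^ 2} := by
  -- The set where `α > 0`
  set S : Set ℝ := W ∩ α ⁻¹' Set.Ioi 0 with hS
  have hSopen : IsOpen S := hα.continuousOn.isOpen_inter_preimage hW isOpen_Ioi
  have hSW : S ⊆ W := Set.inter_subset_left
  have h0S : (0 : ℝ) ∈ S := ⟨h0W, hpos⟩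
  have hSpos : ∀ x ∈ S, 0 < α x := fun x hx => hx.2
  set U : Set (ℝ × ℝ) := Set.univ ×ˢ S with hU
  have hUopen : IsOpen U := isOpen_univ.prod hSopen
  have h0U : (0 : ℝ × ℝ) ∈ U := ⟨trivial, h0S⟩
  have hUsnd : ∀ z ∈ U, z.2 ∈ S := fun z hz => hz.2
  have hane : ∀ z ∈ U, α z.2 ≠ 0 := fun z hz => (hSpos _ hz.2).ne'
  refine ⟨U, U, hUopen, hUopen, h0U, h0U, Set.prod_mono subset_rfl hSW,
    fun z => (z.1 * (α z.2)⁻¹, z.2), fun z => (z.1 * α z.2, z.2), ?_, ?_, ?_, ?_, ?_, ?_, ?_, ?_, ?_⟩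
  · -- smoothness of ψ
    have hαU : ContDiffOn ℝ ∞ (fun z : ℝ × ℝ => α z.2) U :=
      (hα.mono hSW).comp contDiffOn_snd hUsnd
    exact ((contDiffOn_fst.mul (hαU.inv hane)).prodMk contDiffOn_snd)
  · -- smoothness of φ
    have hαU : ContDiffOn ℝ ∞ (fun z : ℝ × ℝ => α z.2) U :=
      (hα.mono hSW).comp contDiffOn_snd hUsnd
    exact (contDiffOn_fst.mul hαU).prodMk contDiffOn_snd
  · exact fun z hz => ⟨trivial, hz.2⟩
  · exact fun z hz => ⟨trivial, hz.2⟩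
  · intro z hz
    simp only
    rw [mul_assoc, inv_mul_cancel₀ (hane z hz), mul_one]
  · intro z hz
    simp only
    rw [mul_assoc, mul_inv_cancel₀ (hane z hz), mul_one]
  · simp
  · -- image of {x₀ = 0}
    ext z
    constructor
    · rintro ⟨w, ⟨hwU, hw0⟩, rfl⟩
      refine ⟨⟨trivial, hwU.2⟩, ?_⟩
      simp only [Set.mem_setOf_eq] at hw0 ⊢
      simp [hw0]
    · rintro ⟨hzU, hz0⟩
      refine ⟨(z.1 * α z.2, z.2), ⟨⟨trivial, hzU.2⟩, ?_⟩, ?_⟩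
      · simp only [Set.mem_setOf_eq] at hz0 ⊢
        simp [hz0]
      · simp only
        rw [mul_assoc, mul_inv_cancel₀ (hane z hzU), mul_one]
  · -- image of the parabola set
    ext z
    constructor
    · rintro ⟨w, ⟨hwU, hw0⟩, rfl⟩
      refine ⟨⟨trivial, hwU.2⟩, ?_⟩
      simp only [Set.mem_setOf_eq] at hw0 ⊢
      rw [hw0, mul_comm (α w.2), mul_assoc, mul_inv_cancel₀ (hane w hwU), mul_one]
    · rintro ⟨hzU, hz0⟩
      refine ⟨(z.1 * α z.2, z.2), ⟨⟨trivial, hzU.2⟩, ?_⟩, ?_⟩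
      · simp only [Set.mem_setOf_eq] at hz0 ⊢
        rw [hz0, mul_comm]
      · simp only
        rw [mul_assoc, mul_inv_cancel₀ (hane z hzU), mul_one]
end
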